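/- Let S, A be finite sets with |A| = n, U the uniform distribution on A, and ε > 0. Define Ω on the set B_× of factorizable μ(s,a) = π(s)(a)·μ_S(s) (with μ_S a probability vector on S and each π(s) a probability vector on A) by Ω(μ) = Σ_s μ_S(s) · KL(π(s), U), and Ω = +∞ outside B_×. Then for all r, r' : S × A → ℝ, ε Ω*((r − r')/ε) = ε · max_{s ∈ S} ( Σ_a exp((r(s,a) − r'(s,a))/ε) · (1/n) − 1 ), where the conjugate is computed with the extended-measure convention of the paper, i.e., with the per-state supremum taken over all nonnegative vectors π(s) (not just probability vectors), using the generalized KL(π, U) = Σ_a [π(a) log(π(a)/U(a)) − π(a) + U(a)]. -/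

import Mathlib

open Finset

/-- Lemma 2 (Soft-Actor-Critic), finite case.  The conjugate supremum is taken
over the paper's extended domain: factorizable `μ(s,a) = π s a · μS s` with `μS`
a probability vector on `S` and each `π s` merely a nonnegative vector, with the
generalized `KL(π, U) = ∑ₐ (π a log(n·π a) − π a + 1/n)`. -/
theorem stmt_15 {S A : Type*} [Fintype S] [Fintype A] [Nonempty S] [Nonempty A]
    (n : ℕ) (hn : n = Fintype.card A) (ε : ℝ) (hε : 0 < ε)
    (r r' : S × A → ℝ) :
    ε * sSup {v : ℝ | ∃ (μS : S → ℝ) (π : S → A → ℝ),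
        (∀ s, 0 ≤ μS s) ∧ (∑ s, μS s = 1) ∧ (∀ s a, 0 ≤ π s a) ∧
        v = (∑ s, ∑ a, ((r (s, a) - r' (s, a)) / ε) * (π s a * μS s))
            - ∑ s, μS s *
                ∑ a, (π s a * Real.log (n * π s a) - π s a + 1 / n)}
      = ε * ⨆ s : S,
          ((∑ a, Real.exp ((r (s, a) - r' (s, a)) / ε) * (1 / n)) - 1) := by
  classical
  have hn1 : 0 < n := hn ▸ Fintype.card_pos
  have hnR : (0:ℝ) < n := by exact_mod_cast hn1
  set h : S → A → ℝ := fun s a => (r (s,a) - r' (s,a)) / ε with hh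
  set f : S → ℝ := fun s => (∑ a, Real.exp (h s a) * (1/n)) - 1 with hf
  -- pointwise key inequality
  have key : ∀ (t x : ℝ), 0 ≤ x →
      t * x - (x * Real.log (n * x) - x + 1/n) ≤ Real.exp t * (1/n) - 1/n := by
    intro t x hx
    rcases eq_or_lt_of_le hx with h0 | h0
    · subst h0
      have h1 : (0:ℝ) < 1/n := by positivity
      have h2 := (Real.exp_pos t).le
      simp only [mul_zero, zero_mul, Real.log_zero, zero_sub, sub_zero, neg_add_rev,
        zero_add]
      nlinarith [mul_nonneg h2 h1.le]
    · have hnx : (0:ℝ) < n * x := by positivity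
      have e1 : Real.exp (t - Real.log (n*x)) = Real.exp t / (n*x) := by
        rw [Real.exp_sub, Real.exp_log hnx]
      have e2 := Real.add_one_le_exp (t - Real.log (n*x))
      have e3 : x * ((t - Real.log (n*x)) + 1) ≤ Real.exp t * (1/n) := by
        calc x * ((t - Real.log (n*x)) + 1)
            ≤ x * Real.exp (t - Real.log (n*x)) := by nlinarith
          _ = Real.exp t * (1/n) := by rw [e1]; field_simp
      nlinarith
  -- rewrite the objective as a μS-weighted sum
  have objeq : ∀ (μS : S → ℝ) (π : S → A → ℝ),
      (∑ s, ∑ a, h s a * (π s a * μS s))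
        - ∑ s, μS s * ∑ a, (π s a * Real.log (n * π s a) - π s a + 1/n)
      = ∑ s, μS s * ((∑ a, h s a * π s a)
          - ∑ a, (π s a * Real.log (n * π s a) - π s a + 1/n)) := by
    intro μS π
    rw [← Finset.sum_sub_distrib]
    refine Finset.sum_congr rfl fun s _ => ?_
    have e : ∑ a, h s a * (π s a * μS s) = μS s * ∑ a, h s a * π s a := by
      rw [Finset.mul_sum]
      exact Finset.sum_congr rfl fun a _ => by ring
    rw [e, mul_sub]
  have inner_le : ∀ (s : S) (π : A → ℝ), (∀ a, 0 ≤ π a) →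
      (∑ a, h s a * π a) - ∑ a, (π a * Real.log (n * π a) - π a + 1/n) ≤ f s := by
    intro s π hπ
    have : (∑ a, h s a * π a) - ∑ a, (π a * Real.log (n * π a) - π a + 1/n)
        = ∑ a, (h s a * π a - (π a * Real.log (n * π a) - π a + 1/n)) := by
      rw [Finset.sum_sub_distrib]
    rw [this, hf]
    have hcard : (∑ _a : A, (1/n : ℝ)) = 1 := by
      rw [Finset.sum_const, Finset.card_univ, ← hn]
      rw [nsmul_eq_mul, mul_one_div_cancel hnR.ne']
    calc ∑ a, (h s a * π a - (π a * Real.log (n * π a) - π a + 1/n))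
        ≤ ∑ a, (Real.exp (h s a) * (1/n) - 1/n) := by
          refine Finset.sum_le_sum fun a _ => key (h s a) (π a) (hπ a)
      _ = (∑ a, Real.exp (h s a) * (1/n)) - 1 := by
          rw [Finset.sum_sub_distrib, hcard]
  -- pick a maximizing state
  obtain ⟨s0, hs0⟩ := Finite.exists_max f
  -- the optimal policy achieves f s for each s
  have opt : ∀ s : S,
      (∑ a, h s a * (Real.exp (h s a) / n))
        - ∑ a, ((Real.exp (h s a) / n) * Real.log (n * (Real.exp (h s a) / n))
            - (Real.exp (h s a) / n) + 1/n) = f s := by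
    intro s
    have hcard : (∑ _a : A, (1/n : ℝ)) = 1 := by
      rw [Finset.sum_const, Finset.card_univ, ← hn]
      rw [nsmul_eq_mul, mul_one_div_cancel hnR.ne']
    have : ∀ a : A, h s a * (Real.exp (h s a) / n)
        - ((Real.exp (h s a) / n) * Real.log (n * (Real.exp (h s a) / n))
            - (Real.exp (h s a) / n) + 1/n)
        = Real.exp (h s a) * (1/n) - 1/n := by
      intro a
      have hne : (n:ℝ) ≠ 0 := ne_of_gt hnR
      have : (n:ℝ) * (Real.exp (h s a) / n) = Real.exp (h s a) := by field_simp
      rw [this, Real.log_exp]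
      ring
    rw [← Finset.sum_sub_distrib]
    calc ∑ a, (h s a * (Real.exp (h s a) / n)
        - ((Real.exp (h s a) / n) * Real.log (n * (Real.exp (h s a) / n))
            - (Real.exp (h s a) / n) + 1/n))
        = ∑ a, (Real.exp (h s a) * (1/n) - 1/n) := Finset.sum_congr rfl fun a _ => this a
      _ = f s := by rw [Finset.sum_sub_distrib, hcard, hf]
  -- the set
  set V : Set ℝ := {v : ℝ | ∃ (μS : S → ℝ) (π : S → A → ℝ),
        (∀ s, 0 ≤ μS s) ∧ (∑ s, μS s = 1) ∧ (∀ s a, 0 ≤ π s a) ∧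
        v = (∑ s, ∑ a, h s a * (π s a * μS s))
            - ∑ s, μS s *
                ∑ a, (π s a * Real.log (n * π s a) - π s a + 1 / n)} with hV
  have delta_sum : ∀ g : S → ℝ, (∑ s, (if s = s0 then (1:ℝ) else 0) * g s) = g s0 := by
    intro g
    simp [ite_mul]
  have hmem : f s0 ∈ V := by
    refine ⟨fun s => if s = s0 then 1 else 0, fun s a => Real.exp (h s a) / n,
      fun s => by positivity, by simp, fun s a => by positivity, ?_⟩
    rw [objeq, delta_sum]
    exact (opt s0).symm
  have hbdd : ∀ v ∈ V, v ≤ f s0 := by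
    rintro v ⟨μS, π, hμ, hμ1, hπ, rfl⟩
    rw [objeq]
    calc ∑ s, μS s * ((∑ a, h s a * π s a)
          - ∑ a, (π s a * Real.log (n * π s a) - π s a + 1/n))
        ≤ ∑ s, μS s * f s0 := Finset.sum_le_sum fun s _ =>
          mul_le_mul_of_nonneg_left ((inner_le s (π s) (hπ s)).trans (hs0 s)) (hμ s)
      _ = f s0 := by rw [← Finset.sum_mul, hμ1, one_mul]
  have hsup : sSup V = f s0 :=
    le_antisymm (csSup_le ⟨_, hmem⟩ hbdd) (le_csSup ⟨f s0, hbdd⟩ hmem)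
  have hisup : (⨆ s, f s) = f s0 :=
    le_antisymm (ciSup_le hs0) (le_ciSup (Finite.bddAbove_range f) s0)
  exact congrArg (ε * ·) (hsup.trans hisup.symm)
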